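/- arXiv:1305.3351 — 3 statements merged into one kernel-verified Lean document; each statement's English description precedes it below -/
import Mathlib

section
/- With the recursive definitions p_i − c = (f_i(L_{i−1}) − c)(1 − w_i) and L_i = g_i((p_i − c)/(1 − w_{i+1}) + c) (L_0 = v, w_{n+1} = 0), we have f_i(L_i) > c for all i ∈ {1,...,n}. -/
/-- With the recursion `p_i − c = (f_i(L_{i−1}) − c)(1 − w_i)`,
`L_i = g_i((p_i − c)/(1 − w_{i+1}) + c)`, `L_0 = v`, we have `p_i − c > 0`
for every `i ∈ {1,...,n}`. -/
theorem f_L_gt_c (n : ℕ) (hn : 1 ≤ n) (c v : ℝ) (hv : c < v)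
    (f g : ℕ → ℝ → ℝ)
    (hfmono : ∀ i, StrictMono (f i)) (hgcont : ∀ i, Continuous (g i))
    (hgmono : ∀ i, StrictMono (g i))
    (hinv : ∀ i y, f i (g i y) = y) (hinv' : ∀ i x, g i (f i x) = x)
    (hford : ∀ i j x, i < j → f i x < f j x)
    (w : ℕ → ℝ) (hw0 : ∀ i ∈ Finset.Icc 1 (n + 1), 0 ≤ w i)
    (hw1 : ∀ i ∈ Finset.Icc 1 (n + 1), w i < 1)
    (hwdec : ∀ i j, 1 ≤ i → i < j → j ≤ n + 1 → w j < w i)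
    (hwn1 : w (n + 1) = 0)
    (hfv : ∀ i ∈ Finset.Icc 1 n, f i v > c)
    (p L : ℕ → ℝ) (hL0 : L 0 = v)
    (hp : ∀ i ∈ Finset.Icc 1 n, p i - c = (f i (L (i - 1)) - c) * (1 - w i))
    (hL : ∀ i ∈ Finset.Icc 1 n, L i = g i ((p i - c) / (1 - w (i + 1)) + c)) :
    ∀ i ∈ Finset.Icc 1 n, c < f i (L i) := by
  intro i
  induction i using Nat.strong_induction_on with
  | _ i IH =>
  intro hi
  obtain ⟨h1, h2⟩ := Finset.mem_Icc.mp hi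
  have hpre : c < f i (L (i - 1)) := by
    rcases Nat.lt_or_ge 1 i with h | h
    · have hIH : c < f (i - 1) (L (i - 1)) :=
        IH (i - 1) (by omega) (Finset.mem_Icc.mpr ⟨by omega, by omega⟩)
      exact hIH.trans (hford (i - 1) i _ (by omega))
    · have hi1 : i = 1 := by omega
      subst hi1
      simpa [hL0] using hfv 1 (Finset.mem_Icc.mpr ⟨le_refl 1, hn⟩)
  have hw_i : w i < 1 := hw1 i (Finset.mem_Icc.mpr ⟨h1, by omega⟩)
  have hw_i1 : w (i + 1) < 1 := hw1 (i + 1) (Finset.mem_Icc.mpr ⟨by omega, by omega⟩)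
  have hpc : 0 < p i - c := by
    rw [hp i hi]
    exact mul_pos (by linarith) (by linarith)
  have hfi : f i (L i) = (p i - c) / (1 - w (i + 1)) + c := by
    rw [hL i hi, hinv]
  rw [hfi]
  have := div_pos hpc (by linarith : (0:ℝ) < 1 - w (i + 1))
  linarith
end

section
/- Suppose x is a best response for state j and y > x is a best response for state i with i > j (all relevant prices exceeding c). Then φ_i(x) ≥ u_{i,max} · [(f_j(y) − c)(f_i(x) − c)] / [(f_i(y) − c)(f_j(x) − c)]; combined with assumption (∗) this yields a contradiction, so no such pair exists. Formally: if (f_i(y) − c)(1 − F(y)) = u_i, (f_j(x) − c)(1 − F(x)) = u_j, u_j ≥ (f_j(y) − c)(1 − F(y)), and (f_j(y) − c)/(f_i(y) − c) > (f_j(x) − c)/(f_i(x) − c) with all factors positive, then (f_i(x) − c)(1 − F(x)) > u_i. -/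
/-- Key inequality for ordering of NE support sets (Theorem 2): if
`(f_i(y) − c)(1 − F(y)) = u_i`, `(f_j(x) − c)(1 − F(x)) = u_j`,
`u_j ≥ (f_j(y) − c)(1 − F(y))`, and
`(f_j(y) − c)/(f_i(y) − c) > (f_j(x) − c)/(f_i(x) − c)` with all factors
positive, then `(f_i(x) − c)(1 − F(x)) > u_i`. -/
theorem support_order_key_inequality (c x y ui uj : ℝ)
    (F fi fj : ℝ → ℝ)
    (hfjx : c < fj x) (hfjy : c < fj y) (hfix : c < fi x) (hfiy : c < fi y)
    (hFx : 0 < 1 - F x) (hFy : 0 < 1 - F y)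
    (hui : 0 < ui) (huj : 0 < uj)
    (h1 : (fi y - c) * (1 - F y) = ui)
    (h2 : (fj x - c) * (1 - F x) = uj)
    (h3 : uj ≥ (fj y - c) * (1 - F y))
    (h4 : (fj y - c) / (fi y - c) > (fj x - c) / (fi x - c)) :
    (fi x - c) * (1 - F x) > ui := by
  rw [gt_iff_lt, div_lt_div_iff₀ (by linarith) (by linarith)] at h4
  nlinarith [mul_pos hFy (sub_pos.mpr hfiy), mul_pos hFx (sub_pos.mpr hfix),
    mul_pos (sub_pos.mpr hfjy) hFy, mul_pos (sub_pos.mpr hfjx) hFx,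
    mul_lt_mul_of_pos_right h4 hFy, mul_le_mul_of_nonneg_left h3 (le_of_lt (sub_pos.mpr hfix))]
end

section
/- Suppose the product formula p_k − c = (p_j − c)·Π_{i=j}^{k−1}(f_{i+1}(L_i) − c)/(f_i(L_i) − c) holds for j < k, and assumption (∗) gives (f_i(L_{i−1}) − c)/(f_j(L_{i−1}) − c) < (f_i(L_i) − c)/(f_j(L_i) − c) for j < i (when f_j(L_i) > c and L_i < L_{i−1}). Then p_k − c ≤ (p_j − c)·(f_k(L_{k−1}) − c)/(f_j(L_{k−1}) − c), provided f_j(L_{k−1}) > c. -/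
/-- Crux of Case ii in the existence proof (Theorem 4): from the product
formula and assumption (∗) one gets
`p_k − c ≤ (p_j − c)·(f_k(L_{k−1}) − c)/(f_j(L_{k−1}) − c)`,
provided `f_j(L_{k−1}) > c`. -/
theorem case_ii_bound (n j k : ℕ) (hj1 : 1 ≤ j) (hjk : j < k) (hkn : k ≤ n)
    (c : ℝ) (f : ℕ → ℝ → ℝ) (L p : ℕ → ℝ)
    (hLdec : ∀ i ∈ Finset.Icc 1 n, L i < L (i - 1))
    (hfmono : ∀ i, StrictMono (f i))
    (hford : ∀ a b x, a < b → f a x < f b x)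
    (hfLi : ∀ i ∈ Finset.Icc 1 n, c < f i (L i))
    (hp : ∀ i ∈ Finset.Icc 1 n, c < p i)
    (hprod : p k - c = (p j - c) *
      ∏ i ∈ Finset.Ico j k, (f (i + 1) (L i) - c) / (f i (L i) - c))
    (hstar : ∀ i, j < i → i ≤ n → c < f j (L i) →
      (f i (L (i - 1)) - c) / (f j (L (i - 1)) - c)
        < (f i (L i) - c) / (f j (L i) - c))
    (hfjLk1 : c < f j (L (k - 1))) :
    p k - c ≤ (p j - c) * (f k (L (k - 1)) - c) / (f j (L (k - 1)) - c) := by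
  have key : ∀ m, j + 1 ≤ m → m ≤ n → c < f j (L (m - 1)) →
      (∏ i ∈ Finset.Ico j m, (f (i + 1) (L i) - c) / (f i (L i) - c))
        ≤ (f m (L (m - 1)) - c) / (f j (L (m - 1)) - c) := by
    intro m hm
    induction m, hm using Nat.le_induction with
    | base =>
      intro _ _
      simp [Finset.prod_Ico_succ_top (le_refl j)]
    | succ m hm ih =>
      intro hmn hfj
      have hjm : j < m := hm
      have hmn' : m ≤ n := le_of_lt (Nat.lt_of_lt_of_le (Nat.lt_succ_self m) hmn)
      have hm1 : 1 ≤ m := le_trans hj1 (le_of_lt hjm)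
      have hmem : m ∈ Finset.Icc 1 n := Finset.mem_Icc.mpr ⟨hm1, hmn'⟩
      have hLm : L m < L (m - 1) := hLdec m hmem
      have hLsucc : L (m + 1 - 1) = L m := by simp
      rw [hLsucc] at hfj
      have hfj' : c < f j (L (m - 1)) := lt_trans hfj ((hfmono j) hLm)
      have ihb := ih hmn' hfj'
      have hstarm := hstar m hjm hmn' hfj
      have hfm : c < f m (L m) := hfLi m hmem
      have hfm1 : c < f (m + 1) (L m) := lt_trans hfm (hford m (m + 1) _ (Nat.lt_succ_self m))
      have ht : (0:ℝ) < (f (m + 1) (L m) - c) / (f m (L m) - c) :=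
        div_pos (by linarith) (by linarith)
      rw [Finset.prod_Ico_succ_top (le_of_lt hjm), hLsucc]
      calc (∏ i ∈ Finset.Ico j m, (f (i + 1) (L i) - c) / (f i (L i) - c)) *
              ((f (m + 1) (L m) - c) / (f m (L m) - c))
          ≤ ((f m (L (m - 1)) - c) / (f j (L (m - 1)) - c)) *
              ((f (m + 1) (L m) - c) / (f m (L m) - c)) := by
            exact mul_le_mul_of_nonneg_right ihb (le_of_lt ht)
        _ ≤ ((f m (L m) - c) / (f j (L m) - c)) *
              ((f (m + 1) (L m) - c) / (f m (L m) - c)) :=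
            mul_le_mul_of_nonneg_right (le_of_lt hstarm) (le_of_lt ht)
        _ = (f (m + 1) (L m) - c) / (f j (L m) - c) := by
            have h1 : f m (L m) - c ≠ 0 := by linarith
            have h2 : f j (L m) - c ≠ 0 := by linarith
            field_simp
  have hprodle := key k hjk hkn hfjLk1
  have hpj : 0 < p j - c := by
    have : j ∈ Finset.Icc 1 n := Finset.mem_Icc.mpr ⟨hj1, le_trans (le_of_lt hjk) hkn⟩
    linarith [hp j this]
  rw [hprod, mul_div_assoc]
  exact mul_le_mul_of_nonneg_left hprodle (le_of_lt hpj)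
end
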